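/- Let w₁, w₂ ∈ ℂ with w₁ ≠ 0 and w₂ ≠ 0, and define δ_n(w) = z_n^{(1)}(w)/h_n^{(1)}(w) whenever h_n^{(1)}(w) ≠ 0. Then there exist N₀ ∈ ℕ and C > 0 such that for all integers n ≥ N₀ one has h_n^{(1)}(w₁) ≠ 0, h_n^{(1)}(w₂) ≠ 0, and |δ_n(w₁) − δ_n(w₂)| ≤ C/n; that is, δ_n(w₁) − δ_n(w₂) = O(1/n) as n → ∞. -/

import Mathlib

open Complex Finset

/-- Spherical Hankel function of the first kind (Rayleigh closed form). -/
noncomputable def sphHankel (n : ℕ) (z : ℂ) : ℂ :=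
  (-Complex.I) ^ (n + 1) * (Complex.exp (Complex.I * z) / z) *
    ∑ k ∈ Finset.range (n + 1),
      (Complex.I ^ k / ((Nat.factorial k : ℂ) * (2 * z) ^ k)) *
        ((Nat.factorial (n + k) : ℂ) / (Nat.factorial (n - k) : ℂ))

/-- `z_n^{(1)}(z) = h_n^{(1)}(z) + z * h_n^{(1)'}(z)`. -/
noncomputable def zfun (n : ℕ) (z : ℂ) : ℂ :=
  sphHankel n z + z * deriv (sphHankel n) z

noncomputable def acoef (n k : ℕ) (w : ℂ) : ℂ :=
  Complex.I ^ k / ((Nat.factorial k : ℂ) * (2 * w) ^ k) *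
    ((Nat.factorial (n + k) : ℂ) / (Nat.factorial (n - k) : ℂ))

noncomputable def Ssum (n : ℕ) (w : ℂ) : ℂ := ∑ k ∈ Finset.range (n + 1), acoef n k w

noncomputable def Tsum (n : ℕ) (w : ℂ) : ℂ :=
  ∑ k ∈ Finset.range (n + 1), (k : ℂ) * acoef n k w

noncomputable def rho (n j : ℕ) : ℝ :=
  2 ^ j * (Nat.factorial n) * (Nat.factorial (2 * n - j)) /
    ((Nat.factorial (n - j)) * (Nat.factorial (2 * n)))

noncomputable def Psum (n : ℕ) (w : ℂ) : ℂ :=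
  ∑ j ∈ Finset.range (n + 1),
    (-Complex.I * w) ^ j / (Nat.factorial j : ℂ) * ((rho n j : ℝ) : ℂ)

noncomputable def Usum (n : ℕ) (w : ℂ) : ℂ :=
  ∑ j ∈ Finset.range (n + 1),
    (j : ℂ) * ((-Complex.I * w) ^ j / (Nat.factorial j : ℂ) * ((rho n j : ℝ) : ℂ))

lemma sphHankel_eq (n : ℕ) (w : ℂ) :
    sphHankel n w = (-Complex.I) ^ (n + 1) * (Complex.exp (Complex.I * w) / w) * Ssum n w := rfl

lemma hasDerivAt_sumPart (n : ℕ) (w : ℂ) (hw : w ≠ 0) :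
    HasDerivAt (fun z => ∑ k ∈ Finset.range (n + 1),
      (Complex.I ^ k / ((Nat.factorial k : ℂ) * (2 * z) ^ k)) *
        ((Nat.factorial (n + k) : ℂ) / (Nat.factorial (n - k) : ℂ)))
      (-(Tsum n w) / w) w := by
  have h2w : (2 : ℂ) * w ≠ 0 := by simp [hw]
  have key : ∀ k ∈ Finset.range (n + 1), HasDerivAt
      (fun z : ℂ => (Complex.I ^ k / ((Nat.factorial k : ℂ) * (2 * z) ^ k)) *
        ((Nat.factorial (n + k) : ℂ) / (Nat.factorial (n - k) : ℂ)))
      (-((k : ℂ) * acoef n k w)/w) w := by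
    intro k _
    have hEq : (fun z : ℂ => (Complex.I ^ k / ((Nat.factorial k : ℂ) * (2 * z) ^ k)) *
        ((Nat.factorial (n + k) : ℂ) / (Nat.factorial (n - k) : ℂ)))
        = fun z : ℂ => (Complex.I ^ k / (Nat.factorial k : ℂ) *
          ((Nat.factorial (n + k) : ℂ) / (Nat.factorial (n - k) : ℂ))) * (2 * z) ^ (-(k:ℤ)) := by
      funext z
      rw [zpow_neg, zpow_natCast]
      field_simp
    rw [hEq]
    have h1 : HasDerivAt (fun z : ℂ => (2 * z) ^ (-(k:ℤ)))
        (((-(k:ℤ) : ℂ) * (2*w) ^ (-(k:ℤ) - 1)) * 2) w := by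
      have := (hasDerivAt_zpow (-(k:ℤ)) (2*w) (Or.inl h2w)).comp w
        ((hasDerivAt_id w).const_mul 2)
      simpa [Function.comp_def] using this
    have := h1.const_mul (Complex.I ^ k / (Nat.factorial k : ℂ) *
          ((Nat.factorial (n + k) : ℂ) / (Nat.factorial (n - k) : ℂ)))
    refine this.congr_deriv ?_
    have hz : (2*w : ℂ) ^ (-(k:ℤ) - 1) = ((2*w)^k)⁻¹ * (2*w)⁻¹ := by
      rw [sub_eq_add_neg, zpow_add₀ h2w, zpow_neg, zpow_natCast, zpow_neg, zpow_one]
    rw [hz, acoef]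
    have hfk : (Nat.factorial k : ℂ) ≠ 0 := Nat.cast_ne_zero.mpr (Nat.factorial_ne_zero k)
    have hp : ((2*w : ℂ))^k ≠ 0 := pow_ne_zero _ h2w
    field_simp
    push_cast
    ring
  have := HasDerivAt.fun_sum key
  refine this.congr_deriv ?_
  rw [Tsum]
  simp [neg_div, Finset.sum_div, Finset.sum_neg_distrib]

lemma hasDerivAt_sphHankel (n : ℕ) (w : ℂ) (hw : w ≠ 0) :
    HasDerivAt (sphHankel n)
      ((-Complex.I) ^ (n + 1) *
        ((Complex.exp (Complex.I * w) * (Complex.I * w - 1)) / w ^ 2 * Ssum n w +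
          Complex.exp (Complex.I * w) / w * (-(Tsum n w) / w))) w := by
  have hexp : HasDerivAt (fun z : ℂ => Complex.exp (Complex.I * z))
      (Complex.exp (Complex.I * w) * Complex.I) w := by
    simpa [Function.comp_def] using (Complex.hasDerivAt_exp (Complex.I * w)).comp w
      ((hasDerivAt_id w).const_mul Complex.I)
  have hf1 : HasDerivAt (fun z : ℂ => Complex.exp (Complex.I * z) / z)
      ((Complex.exp (Complex.I * w) * (Complex.I * w - 1)) / w ^ 2) w := by
    have := hexp.div (hasDerivAt_id w) hw
    refine this.congr_deriv ?_
    simp only [id]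
    field_simp
  have hS := hasDerivAt_sumPart n w hw
  have := ((hf1.const_mul ((-Complex.I) ^ (n + 1))).mul hS)
  have hsum : (∑ k ∈ Finset.range (n + 1),
      (Complex.I ^ k / ((Nat.factorial k : ℂ) * (2 * w) ^ k)) *
        ((Nat.factorial (n + k) : ℂ) / (Nat.factorial (n - k) : ℂ))) = Ssum n w := rfl
  rw [hsum] at this
  refine this.congr_deriv ?_
  ring

lemma zfun_div (n : ℕ) (w : ℂ) (hw : w ≠ 0) (hS : Ssum n w ≠ 0) :
    zfun n w / sphHankel n w = Complex.I * w - Tsum n w / Ssum n w := by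
  have hd := (hasDerivAt_sphHankel n w hw).deriv
  rw [zfun, hd, sphHankel_eq]
  have hK0 : ((-Complex.I : ℂ)) ^ (n + 1) ≠ 0 := pow_ne_zero _ (by simp [Complex.I_ne_zero])
  generalize hKdef : ((-Complex.I : ℂ)) ^ (n + 1) = K at *
  have hK : K ≠ 0 := hK0
  have hE : Complex.exp (Complex.I * w) ≠ 0 := Complex.exp_ne_zero _
  have hKE : K * (Complex.exp (Complex.I * w) / w) ≠ 0 :=
    mul_ne_zero hK (div_ne_zero hE hw)
  have hnum : K * (Complex.exp (Complex.I * w) / w) * Ssum n w +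
      w * (K * (Complex.exp (Complex.I * w) * (Complex.I * w - 1) / w ^ 2 * Ssum n w +
        Complex.exp (Complex.I * w) / w * (-Tsum n w / w)))
      = (K * (Complex.exp (Complex.I * w) / w)) * (Complex.I * w * Ssum n w - Tsum n w) := by
    field_simp
    ring
  rw [hnum, mul_div_mul_left _ _ hKE, sub_div, mul_div_assoc,
    div_self hS, mul_one]

lemma acoef_reflect (n j : ℕ) (w : ℂ) (hw : w ≠ 0) (hj : j ≤ n) :
    acoef n (n - j) w
      = acoef n n w * ((-Complex.I * w) ^ j / (Nat.factorial j : ℂ) * ((rho n j : ℝ) : ℂ)) := by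
  obtain ⟨m, rfl⟩ : ∃ m, n = m + j := ⟨n - j, by omega⟩
  have h1 : m + j - j = m := by omega
  have h2 : (m + j) + m = 2 * (m + j) - j := by omega
  have h3 : (m + j) - m = j := by omega
  have h4 : (m + j) + (m + j) = 2 * (m + j) := by omega
  have h5 : (m + j) - (m + j) = 0 := by omega
  have h2w : (2 : ℂ) * w ≠ 0 := by simp [hw]
  have hfm : (Nat.factorial m : ℂ) ≠ 0 := Nat.cast_ne_zero.mpr (Nat.factorial_ne_zero m)
  have hfj : (Nat.factorial j : ℂ) ≠ 0 := Nat.cast_ne_zero.mpr (Nat.factorial_ne_zero j)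
  have hfmj : (Nat.factorial (m + j) : ℂ) ≠ 0 := Nat.cast_ne_zero.mpr (Nat.factorial_ne_zero _)
  have hf2 : (Nat.factorial (2 * (m + j)) : ℂ) ≠ 0 := Nat.cast_ne_zero.mpr (Nat.factorial_ne_zero _)
  have hpm : ((2 : ℂ) * w) ^ m ≠ 0 := pow_ne_zero _ h2w
  have hpmj : ((2 : ℂ) * w) ^ (m + j) ≠ 0 := pow_ne_zero _ h2w
  have key : ((2:ℂ) * w) ^ j = (-Complex.I * w) ^ j * (Complex.I ^ j * (2:ℂ) ^ j) := by
    rw [← mul_pow, ← mul_pow]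
    congr 1
    linear_combination (2 : ℂ) * w * Complex.I_sq
  have hρ : ((rho (m + j) j : ℝ) : ℂ) =
      ((2:ℂ) ^ j * (Nat.factorial (m + j) : ℂ) * (Nat.factorial (2 * (m + j) - j) : ℂ)) /
        ((Nat.factorial m : ℂ) * (Nat.factorial (2 * (m + j)) : ℂ)) := by
    rw [rho, h1]
    push_cast
    ring
  rw [acoef, acoef, h1, h2, h3, h4, h5, Nat.factorial_zero, hρ]
  rw [div_mul_div_comm, div_mul_div_comm, Nat.cast_one, mul_one, div_mul_div_comm,
    div_mul_div_comm]
  rw [div_eq_div_iff (mul_ne_zero (mul_ne_zero hfm hpm) hfj)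
    (mul_ne_zero (mul_ne_zero hfmj hpmj) (mul_ne_zero hfj (mul_ne_zero hfm hf2)))]
  rw [pow_add Complex.I m j, pow_add ((2:ℂ)*w) m j, key]
  ring

lemma Ssum_eq (n : ℕ) (w : ℂ) (hw : w ≠ 0) : Ssum n w = acoef n n w * Psum n w := by
  rw [Ssum, ← Finset.sum_range_reflect, Psum, Finset.mul_sum]
  refine Finset.sum_congr rfl fun j hj => ?_
  have hj' : j ≤ n := by
    rw [Finset.mem_range] at hj; omega
  have h6 : n + 1 - 1 - j = n - j := by omega
  rw [h6, acoef_reflect n j w hw hj']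

lemma Tsum_eq (n : ℕ) (w : ℂ) (hw : w ≠ 0) :
    Tsum n w = (n : ℂ) * Ssum n w - acoef n n w * Usum n w := by
  have step1 : Tsum n w = ∑ j ∈ Finset.range (n + 1),
      ((n : ℂ) - j) * (acoef n n w *
        ((-Complex.I * w) ^ j / (Nat.factorial j : ℂ) * ((rho n j : ℝ) : ℂ))) := by
    rw [Tsum, ← Finset.sum_range_reflect]
    refine Finset.sum_congr rfl fun j hj => ?_
    have hj' : j ≤ n := by rw [Finset.mem_range] at hj; omega
    have h6 : n + 1 - 1 - j = n - j := by omega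
    rw [h6, acoef_reflect n j w hw hj', Nat.cast_sub hj']
  rw [step1, Ssum_eq n w hw, Psum, Usum, Finset.mul_sum, Finset.mul_sum, Finset.mul_sum,
    ← Finset.sum_sub_distrib]
  refine Finset.sum_congr rfl fun j hj => ?_
  ring

lemma rho_nonneg (n j : ℕ) : 0 ≤ rho n j := by
  rw [rho]
  positivity

lemma rho_zero (n : ℕ) : rho n 0 = 1 := by
  have h1 : (0:ℝ) < (Nat.factorial n : ℝ) := by exact_mod_cast Nat.factorial_pos n
  have h2 : (0:ℝ) < (Nat.factorial (2*n) : ℝ) := by exact_mod_cast Nat.factorial_pos (2*n)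
  rw [rho, pow_zero, Nat.sub_zero, Nat.sub_zero, one_mul]
  field_simp

lemma rho_succ (n j : ℕ) (h : j + 1 ≤ n) :
    rho n (j + 1) = rho n j * (2 * ((n:ℝ) - j)) / (2 * (n:ℝ) - j) := by
  obtain ⟨p, rfl⟩ : ∃ p, n = p + (j + 1) := ⟨n - (j+1), by omega⟩
  have e1 : p + (j + 1) - (j + 1) = p := by omega
  have e2 : 2 * (p + (j + 1)) - (j + 1) = 2*p + j + 1 := by omega
  have e3 : p + (j + 1) - j = p + 1 := by omega
  have e4 : 2 * (p + (j + 1)) - j = (2*p + j + 1) + 1 := by omega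
  rw [rho, rho, e1, e2, e3, e4, Nat.factorial_succ (2*p+j+1), Nat.factorial_succ p]
  have h1 : (0:ℝ) < (Nat.factorial p : ℝ) := by exact_mod_cast Nat.factorial_pos p
  have h2 : (0:ℝ) < (Nat.factorial (2*(p+(j+1))) : ℝ) := by
    exact_mod_cast Nat.factorial_pos _
  have h3 : (0:ℝ) < (Nat.factorial (2*p+j+1) : ℝ) := by exact_mod_cast Nat.factorial_pos _
  push_cast
  have hp0 : (0:ℝ) ≤ p := Nat.cast_nonneg p
  have hj0 : (0:ℝ) ≤ j := Nat.cast_nonneg j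
  have h4 : 2 * ((p:ℝ) + ((j:ℝ) + 1)) - j ≠ 0 := by nlinarith
  field_simp
  ring

lemma rho_le_one (n j : ℕ) (hj : j ≤ n) : rho n j ≤ 1 := by
  induction j with
  | zero => rw [rho_zero]
  | succ j ih =>
    have hj' : j ≤ n := by omega
    have hjn : (j:ℝ) < (n:ℝ) := by exact_mod_cast (by omega : j < n)
    rw [rho_succ n j hj]
    have hfac : (2 * ((n:ℝ) - j)) / (2 * (n:ℝ) - j) ≤ 1 := by
      rw [div_le_one (by linarith)]
      linarith
    have h0 : 0 ≤ (2 * ((n:ℝ) - j)) / (2 * (n:ℝ) - j) := by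
      apply div_nonneg <;> linarith
    calc rho n j * (2 * ((n:ℝ) - j)) / (2 * (n:ℝ) - j)
        = rho n j * ((2 * ((n:ℝ) - j)) / (2 * (n:ℝ) - j)) := by ring
      _ ≤ 1 * 1 := mul_le_mul (ih hj') hfac h0 zero_le_one
      _ = 1 := one_mul 1

lemma rho_diff (n j : ℕ) (hj : j + 1 ≤ n) :
    rho n j - rho n (j + 1) = rho n j * (j / (2 * (n:ℝ) - j)) := by
  have hjn : (j:ℝ) < (n:ℝ) := by exact_mod_cast (by omega : j < n)
  rw [rho_succ n j hj]
  have hne : 2 * (n:ℝ) - j ≠ 0 := by linarith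
  field_simp
  ring

lemma rho_diff_bound (n j : ℕ) (hj : j + 1 ≤ n) :
    |rho n j - rho n (j + 1)| ≤ (j:ℝ) / n := by
  have hjn : (j:ℝ) < (n:ℝ) := by exact_mod_cast (by omega : j < n)
  have hn : (0:ℝ) < n := by linarith [Nat.cast_nonneg (α := ℝ) j]
  have hd : (0:ℝ) < 2 * (n:ℝ) - j := by linarith
  rw [rho_diff n j hj, _root_.abs_of_nonneg (mul_nonneg (rho_nonneg n j) (div_nonneg (Nat.cast_nonneg j) hd.le))]
  have h1 : rho n j * ((j:ℝ) / (2 * (n:ℝ) - j)) ≤ 1 * ((j:ℝ) / (2 * (n:ℝ) - j)) := by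
    apply mul_le_mul_of_nonneg_right (rho_le_one n j (by omega)) (div_nonneg (Nat.cast_nonneg j) hd.le)
  have h2 : (j:ℝ) / (2 * (n:ℝ) - j) ≤ (j:ℝ) / n := by
    apply div_le_div_of_nonneg_left (Nat.cast_nonneg j) hn
    linarith
  linarith

lemma one_sub_rho (n j : ℕ) (hj : j ≤ n) (hn : 1 ≤ n) : 1 - rho n j ≤ (j:ℝ)^2 / n := by
  have hn' : (0:ℝ) < n := by exact_mod_cast hn
  induction j with
  | zero => simp [rho_zero]
  | succ j ih =>
    have hj' : j ≤ n := by omega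
    have hdiff : rho n j - rho n (j+1) ≤ (j:ℝ)/n :=
      le_trans (le_abs_self _) (rho_diff_bound n j hj)
    have hih := ih hj'
    push_cast
    have hj0 : (0:ℝ) ≤ j := Nat.cast_nonneg j
    have hstep : ((j:ℝ)^2 + j)/n ≤ (((j:ℝ)+1)^2)/n := by
      gcongr
      nlinarith
    have he : (j:ℝ)^2/n + (j:ℝ)/n = ((j:ℝ)^2+j)/n := by rw [← add_div]
    linarith


lemma nat_le_two_pow (j : ℕ) : (j:ℝ) ≤ 2 ^ j := by
  exact_mod_cast (Nat.lt_two_pow_self (n := j)).le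

lemma sq_le_four_pow (j : ℕ) : (j:ℝ)^2 ≤ 4 ^ j := by
  have h1 : (j:ℝ)^2 ≤ ((2:ℝ)^j)^2 :=
    pow_le_pow_left₀ (Nat.cast_nonneg j) (nat_le_two_pow j) 2
  have h2 : ((2:ℝ)^j)^2 = 4^j := by
    rw [← pow_mul, mul_comm, pow_mul]
    norm_num
  linarith

lemma term_le_exp (x : ℝ) (hx : 0 ≤ x) (m : ℕ) : x^m / (Nat.factorial m : ℝ) ≤ Real.exp x := by
  have h := Real.sum_le_exp_of_nonneg hx (m+1)
  have h2 : x^m / (Nat.factorial m : ℝ) ≤ ∑ i ∈ Finset.range (m+1), x^i / (Nat.factorial i : ℝ) :=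
    Finset.single_le_sum (f := fun i => x^i/(Nat.factorial i : ℝ))
      (fun i _ => by positivity) (Finset.self_mem_range_succ m)
  linarith

lemma tail_bound (x : ℝ) (hx : 0 ≤ x) (n : ℕ) (hn : 1 ≤ n) :
    x^(n+1) / (Nat.factorial n : ℝ) ≤ x^2 * Real.exp x / n := by
  obtain ⟨p, rfl⟩ : ∃ p, n = p + 1 := ⟨n-1, by omega⟩
  have hp1 : (0:ℝ) < (p:ℝ) + 1 := by positivity
  have h1 : x^((p+1)+1)/((Nat.factorial (p+1)) : ℝ) = x^2 * (x^p/(Nat.factorial p : ℝ)) / ((p:ℝ)+1) := by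
    rw [Nat.factorial_succ]
    have hfp : ((Nat.factorial p : ℕ):ℝ) ≠ 0 := Nat.cast_ne_zero.mpr (Nat.factorial_ne_zero p)
    push_cast
    field_simp
    ring
  rw [h1]
  push_cast
  gcongr
  exact term_le_exp x hx p

lemma norm_base (w : ℂ) (j : ℕ) : ‖(-Complex.I * w)^j‖ = ‖w‖^j := by
  rw [norm_pow]
  congr 1
  simp

lemma Psum_close (n : ℕ) (hn : 1 ≤ n) (w : ℂ) :
    ‖Psum n w - ∑ j ∈ Finset.range (n+1), (-Complex.I*w)^j / (Nat.factorial j : ℂ)‖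
      ≤ Real.exp (4*‖w‖) / n := by
  have hn' : (0:ℝ) < n := by exact_mod_cast hn
  rw [Psum, ← Finset.sum_sub_distrib]
  refine le_trans (norm_sum_le _ _) ?_
  have hterm : ∀ j ∈ Finset.range (n+1),
      ‖(-Complex.I*w)^j/(Nat.factorial j : ℂ) * ((rho n j : ℝ):ℂ)
        - (-Complex.I*w)^j/(Nat.factorial j : ℂ)‖ ≤ (4*‖w‖)^j/(Nat.factorial j : ℝ)/n := by
    intro j hj
    have hj' : j ≤ n := by rw [Finset.mem_range] at hj; omega
    have h1 : (-Complex.I*w)^j/(Nat.factorial j : ℂ) * ((rho n j : ℝ):ℂ)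
        - (-Complex.I*w)^j/(Nat.factorial j : ℂ)
        = (-Complex.I*w)^j/(Nat.factorial j : ℂ) * (((rho n j - 1 : ℝ)):ℂ) := by
      push_cast
      ring
    rw [h1, norm_mul, norm_div, norm_base, Complex.norm_natCast, Complex.norm_real,
      Real.norm_eq_abs, abs_of_nonpos (by linarith [rho_le_one n j hj'])]
    have h2 : -(rho n j - 1) ≤ (j:ℝ)^2/n := by
      have := one_sub_rho n j hj' hn
      linarith
    calc ‖w‖^j/(Nat.factorial j : ℝ) * -(rho n j - 1)
        ≤ ‖w‖^j/(Nat.factorial j : ℝ) * ((j:ℝ)^2/n) := by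
          apply mul_le_mul_of_nonneg_left h2 (by positivity)
      _ = (j:ℝ)^2 * ‖w‖^j / (Nat.factorial j : ℝ) / n := by ring
      _ ≤ (4*‖w‖)^j/(Nat.factorial j : ℝ)/n := by
          gcongr
          rw [mul_pow]
          exact mul_le_mul_of_nonneg_right (sq_le_four_pow j) (by positivity)
  refine le_trans (Finset.sum_le_sum hterm) ?_
  have heq : ∑ j ∈ Finset.range (n+1), (4*‖w‖)^j/(Nat.factorial j : ℝ)/n
      = (∑ j ∈ Finset.range (n+1), (4*‖w‖)^j/(Nat.factorial j : ℝ))/n := by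
    rw [Finset.sum_div]
  rw [heq]
  gcongr
  exact Real.sum_le_exp_of_nonneg (by positivity) (n+1)

lemma U_bound (n : ℕ) (hn : 1 ≤ n) (w : ℂ) :
    ‖Usum n w + Complex.I*w*Psum n w‖
      ≤ (‖w‖ * Real.exp (2*‖w‖) + ‖w‖^2 * Real.exp ‖w‖) / n := by
  have hn' : (0:ℝ) < n := by exact_mod_cast hn
  have hU : Usum n w = ∑ j ∈ Finset.range n,
      (-Complex.I*w)^(j+1)/(Nat.factorial j : ℂ) * ((rho n (j+1) : ℝ):ℂ) := by
    rw [Usum, Finset.sum_range_succ']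
    simp only [Nat.cast_zero, zero_mul, add_zero]
    refine Finset.sum_congr rfl fun j _ => ?_
    rw [Nat.factorial_succ]
    have hj1 : ((j:ℂ)+1) ≠ 0 := Nat.cast_add_one_ne_zero j
    have hjf : ((Nat.factorial j : ℕ):ℂ) ≠ 0 := Nat.cast_ne_zero.mpr (Nat.factorial_ne_zero j)
    push_cast
    field_simp
  have hP : Complex.I*w*Psum n w = (∑ j ∈ Finset.range n,
      (-((-Complex.I*w)^(j+1)))/(Nat.factorial j : ℂ) * ((rho n j : ℝ):ℂ))
      + (-((-Complex.I*w)^(n+1)))/(Nat.factorial n : ℂ) * ((rho n n : ℝ):ℂ) := by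
    rw [Psum, Finset.mul_sum, Finset.sum_range_succ]
    congr 1
    · refine Finset.sum_congr rfl fun j _ => ?_
      rw [pow_succ]
      ring
    · rw [pow_succ]
      ring
  have hcomb : Usum n w + Complex.I*w*Psum n w
      = (∑ j ∈ Finset.range n, (-Complex.I*w)^(j+1)/(Nat.factorial j : ℂ)
          * (((rho n (j+1) - rho n j : ℝ)):ℂ))
        + (-((-Complex.I*w)^(n+1)))/(Nat.factorial n : ℂ) * ((rho n n : ℝ):ℂ) := by
    rw [hU, hP, ← add_assoc, ← Finset.sum_add_distrib]
    congr 1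
    refine Finset.sum_congr rfl fun j _ => ?_
    push_cast
    ring
  rw [hcomb]
  refine le_trans (norm_add_le _ _) ?_
  have hlast : ‖(-((-Complex.I*w)^(n+1)))/(Nat.factorial n : ℂ) * ((rho n n : ℝ):ℂ)‖
      ≤ ‖w‖^2 * Real.exp ‖w‖ / n := by
    rw [norm_mul, norm_div, norm_neg, norm_base, Complex.norm_natCast, Complex.norm_real,
      Real.norm_eq_abs, _root_.abs_of_nonneg (rho_nonneg n n)]
    calc ‖w‖^(n+1)/(Nat.factorial n : ℝ) * rho n n
        ≤ ‖w‖^(n+1)/(Nat.factorial n : ℝ) * 1 := by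
          apply mul_le_mul_of_nonneg_left (rho_le_one n n le_rfl) (by positivity)
      _ = ‖w‖^(n+1)/(Nat.factorial n : ℝ) := mul_one _
      _ ≤ ‖w‖^2 * Real.exp ‖w‖ / n := tail_bound ‖w‖ (norm_nonneg w) n hn
  have hsum : ‖∑ j ∈ Finset.range n, (-Complex.I*w)^(j+1)/(Nat.factorial j : ℂ)
      * (((rho n (j+1) - rho n j : ℝ)):ℂ)‖ ≤ ‖w‖ * Real.exp (2*‖w‖) / n := by
    refine le_trans (norm_sum_le _ _) ?_
    have hterm : ∀ j ∈ Finset.range n,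
        ‖(-Complex.I*w)^(j+1)/(Nat.factorial j : ℂ) * (((rho n (j+1) - rho n j : ℝ)):ℂ)‖
          ≤ ‖w‖ * (2*‖w‖)^j/(Nat.factorial j : ℝ) / n := by
      intro j hj
      have hj' : j + 1 ≤ n := by rw [Finset.mem_range] at hj; omega
      rw [norm_mul, norm_div, norm_base, Complex.norm_natCast, Complex.norm_real,
        Real.norm_eq_abs, abs_sub_comm]
      have hd := rho_diff_bound n j hj'
      calc ‖w‖^(j+1)/(Nat.factorial j : ℝ) * |rho n j - rho n (j+1)|
          ≤ ‖w‖^(j+1)/(Nat.factorial j : ℝ) * ((j:ℝ)/n) := by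
            apply mul_le_mul_of_nonneg_left hd (by positivity)
        _ = (j:ℝ) * ‖w‖^(j+1) / (Nat.factorial j : ℝ) / n := by ring
        _ ≤ ‖w‖ * (2*‖w‖)^j/(Nat.factorial j : ℝ) / n := by
            have hnum : (j:ℝ) * ‖w‖^(j+1) ≤ ‖w‖ * (2*‖w‖)^j := by
              calc (j:ℝ) * ‖w‖^(j+1) ≤ 2^j * ‖w‖^(j+1) :=
                  mul_le_mul_of_nonneg_right (nat_le_two_pow j) (by positivity)
                _ = ‖w‖ * (2*‖w‖)^j := by rw [mul_pow, pow_succ]; ring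
            rw [div_div, div_div]
            exact div_le_div₀ (by positivity) hnum (by positivity) le_rfl
    refine le_trans (Finset.sum_le_sum hterm) ?_
    have heq : ∑ j ∈ Finset.range n, ‖w‖ * (2*‖w‖)^j/(Nat.factorial j : ℝ) / n
        = ‖w‖/n * (∑ j ∈ Finset.range n, (2*‖w‖)^j/(Nat.factorial j : ℝ)) := by
      rw [Finset.mul_sum]
      exact Finset.sum_congr rfl fun j _ => by ring
    rw [heq]
    have hle := Real.sum_le_exp_of_nonneg (by positivity : (0:ℝ) ≤ 2*‖w‖) n
    calc ‖w‖/n * (∑ j ∈ Finset.range n, (2*‖w‖)^j/(Nat.factorial j : ℝ))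
        ≤ ‖w‖/n * Real.exp (2*‖w‖) :=
          mul_le_mul_of_nonneg_left hle (by positivity)
      _ = ‖w‖ * Real.exp (2*‖w‖) / n := by ring
  calc _ ≤ ‖w‖ * Real.exp (2*‖w‖) / n + ‖w‖^2 * Real.exp ‖w‖ / n := add_le_add hsum hlast
    _ = (‖w‖ * Real.exp (2*‖w‖) + ‖w‖^2 * Real.exp ‖w‖) / n := by ring

lemma partial_tendsto (z : ℂ) :
    Filter.Tendsto (fun n => ∑ j ∈ Finset.range (n+1), z^j/(Nat.factorial j : ℂ))
      Filter.atTop (nhds (Complex.exp z)) := by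
  rw [Complex.exp_eq_exp_ℂ]
  exact ((NormedSpace.expSeries_div_hasSum_exp z).tendsto_sum_nat).comp
    (Filter.tendsto_add_atTop_nat 1)

lemma acoef_nn_ne_zero (n : ℕ) (w : ℂ) (hw : w ≠ 0) : acoef n n w ≠ 0 := by
  rw [acoef]
  have h2w : (2 : ℂ) * w ≠ 0 := by simp [hw]
  exact mul_ne_zero
    (div_ne_zero (pow_ne_zero _ Complex.I_ne_zero)
      (mul_ne_zero (Nat.cast_ne_zero.mpr (Nat.factorial_ne_zero n)) (pow_ne_zero _ h2w)))
    (div_ne_zero (Nat.cast_ne_zero.mpr (Nat.factorial_ne_zero _))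
      (Nat.cast_ne_zero.mpr (Nat.factorial_ne_zero _)))

lemma main_w (w : ℂ) (hw : w ≠ 0) : ∃ N : ℕ, 1 ≤ N ∧ ∀ n, N ≤ n → Ssum n w ≠ 0 ∧
    ‖Tsum n w / Ssum n w - (n:ℂ) - Complex.I*w‖
      ≤ (2 * (‖w‖ * Real.exp (2*‖w‖) + ‖w‖^2 * Real.exp ‖w‖)
          / ‖Complex.exp (-Complex.I*w)‖) / n := by
  set c := ‖Complex.exp (-Complex.I*w)‖ with hcdef
  have hc0 : 0 < c := norm_pos_iff.mpr (Complex.exp_ne_zero _)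
  have htt := partial_tendsto (-Complex.I*w)
  rw [Metric.tendsto_atTop] at htt
  obtain ⟨N₁, hN₁⟩ := htt (c/4) (by positivity)
  obtain ⟨N₂, hN₂⟩ := exists_nat_ge (4 * Real.exp (4*‖w‖) / c)
  refine ⟨max (max N₁ N₂) 1, le_max_right _ _, fun n hn => ?_⟩
  have hn1 : 1 ≤ n := le_trans (le_max_right _ _) hn
  have hnN₁ : N₁ ≤ n := le_trans (le_trans (le_max_left N₁ N₂) (le_max_left _ 1)) hn
  have hnN₂ : N₂ ≤ n := le_trans (le_trans (le_max_right N₁ N₂) (le_max_left _ 1)) hn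
  have hn' : (0:ℝ) < n := by exact_mod_cast hn1
  have hsmall : Real.exp (4*‖w‖) / n ≤ c/4 := by
    rw [div_le_div_iff₀ hn' (by norm_num)]
    have hle : 4 * Real.exp (4*‖w‖) / c ≤ (n:ℝ) :=
      le_trans hN₂ (by exact_mod_cast hnN₂)
    have h8 : 4 * Real.exp (4*‖w‖) ≤ (n:ℝ) * c := by
      calc 4 * Real.exp (4*‖w‖) = (4 * Real.exp (4*‖w‖)/c) * c := by field_simp
        _ ≤ (n:ℝ) * c := mul_le_mul_of_nonneg_right hle hc0.le
    linarith
  have hclose := hN₁ n hnN₁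
  rw [dist_eq_norm] at hclose
  have hPs := Psum_close n hn1 w
  have hPlow : c/2 ≤ ‖Psum n w‖ := by
    have htri : ‖Psum n w - Complex.exp (-Complex.I*w)‖
        ≤ ‖Psum n w - ∑ j ∈ Finset.range (n+1), (-Complex.I*w)^j/(Nat.factorial j : ℂ)‖
          + ‖(∑ j ∈ Finset.range (n+1), (-Complex.I*w)^j/(Nat.factorial j : ℂ))
            - Complex.exp (-Complex.I*w)‖ := by
      have := norm_add_le (Psum n w - ∑ j ∈ Finset.range (n+1),
        (-Complex.I*w)^j/(Nat.factorial j : ℂ))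
        ((∑ j ∈ Finset.range (n+1), (-Complex.I*w)^j/(Nat.factorial j : ℂ))
          - Complex.exp (-Complex.I*w))
      simpa using this
    have h2 : c ≤ ‖Psum n w‖ + ‖Psum n w - Complex.exp (-Complex.I*w)‖ := by
      have h := norm_sub_le (Psum n w) (Psum n w - Complex.exp (-Complex.I*w))
      have he : Psum n w - (Psum n w - Complex.exp (-Complex.I*w))
          = Complex.exp (-Complex.I*w) := by ring
      rw [he] at h
      exact h
    linarith
  have hPne : Psum n w ≠ 0 := by
    intro h
    rw [h, norm_zero] at hPlow
    linarith
  have haN : acoef n n w ≠ 0 := acoef_nn_ne_zero n w hw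
  have hSne : Ssum n w ≠ 0 := by
    rw [Ssum_eq n w hw]
    exact mul_ne_zero haN hPne
  refine ⟨hSne, ?_⟩
  have hTS : Tsum n w / Ssum n w - (n:ℂ) - Complex.I*w
      = -((Usum n w + Complex.I*w*Psum n w)/Psum n w) := by
    rw [Tsum_eq n w hw, Ssum_eq n w hw]
    field_simp
    ring
  rw [hTS, norm_neg, norm_div]
  have hUb := U_bound n hn1 w
  calc ‖Usum n w + Complex.I*w*Psum n w‖ / ‖Psum n w‖
      ≤ ((‖w‖ * Real.exp (2*‖w‖) + ‖w‖^2 * Real.exp ‖w‖) / n) / (c/2) :=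
        div_le_div₀ (by positivity) hUb (by positivity) hPlow
    _ = (2 * (‖w‖ * Real.exp (2*‖w‖) + ‖w‖^2 * Real.exp ‖w‖) / c) / n := by
        field_simp

theorem delta_diff_asymptotic (w₁ w₂ : ℂ) (hw₁ : w₁ ≠ 0) (hw₂ : w₂ ≠ 0) :
    ∃ (N₀ : ℕ) (C : ℝ), 0 < C ∧ ∀ n : ℕ, N₀ ≤ n →
      sphHankel n w₁ ≠ 0 ∧ sphHankel n w₂ ≠ 0 ∧
      ‖zfun n w₁ / sphHankel n w₁ - zfun n w₂ / sphHankel n w₂‖ ≤ C / n := by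
  obtain ⟨Na, hNa1, hA⟩ := main_w w₁ hw₁
  obtain ⟨Nb, hNb1, hB⟩ := main_w w₂ hw₂
  set C₁ := (2 * (‖w₁‖ * Real.exp (2*‖w₁‖) + ‖w₁‖^2 * Real.exp ‖w₁‖)
    / ‖Complex.exp (-Complex.I*w₁)‖) with hC₁def
  set C₂ := (2 * (‖w₂‖ * Real.exp (2*‖w₂‖) + ‖w₂‖^2 * Real.exp ‖w₂‖)
    / ‖Complex.exp (-Complex.I*w₂)‖) with hC₂def
  have hc₁ : 0 < ‖Complex.exp (-Complex.I*w₁)‖ := norm_pos_iff.mpr (Complex.exp_ne_zero _)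
  have hc₂ : 0 < ‖Complex.exp (-Complex.I*w₂)‖ := norm_pos_iff.mpr (Complex.exp_ne_zero _)
  have hw₁n : 0 < ‖w₁‖ := norm_pos_iff.mpr hw₁
  have hw₂n : 0 < ‖w₂‖ := norm_pos_iff.mpr hw₂
  have hC₁ : 0 < C₁ := by
    rw [hC₁def]
    positivity
  have hC₂ : 0 < C₂ := by
    rw [hC₂def]
    positivity
  refine ⟨max Na Nb, C₁ + C₂, by positivity, fun n hn => ?_⟩
  have hna : Na ≤ n := le_trans (le_max_left _ _) hn
  have hnb : Nb ≤ n := le_trans (le_max_right _ _) hn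
  obtain ⟨hS₁, hE₁⟩ := hA n hna
  obtain ⟨hS₂, hE₂⟩ := hB n hnb
  have hK : ((-Complex.I : ℂ)) ^ (n + 1) ≠ 0 := pow_ne_zero _ (by simp [Complex.I_ne_zero])
  have hne₁ : sphHankel n w₁ ≠ 0 := by
    rw [sphHankel_eq]
    exact mul_ne_zero (mul_ne_zero hK (div_ne_zero (Complex.exp_ne_zero _) hw₁)) hS₁
  have hne₂ : sphHankel n w₂ ≠ 0 := by
    rw [sphHankel_eq]
    exact mul_ne_zero (mul_ne_zero hK (div_ne_zero (Complex.exp_ne_zero _) hw₂)) hS₂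
  refine ⟨hne₁, hne₂, ?_⟩
  rw [zfun_div n w₁ hw₁ hS₁, zfun_div n w₂ hw₂ hS₂]
  have hrew : Complex.I * w₁ - Tsum n w₁ / Ssum n w₁ - (Complex.I * w₂ - Tsum n w₂ / Ssum n w₂)
      = (Tsum n w₂ / Ssum n w₂ - (n:ℂ) - Complex.I*w₂)
        - (Tsum n w₁ / Ssum n w₁ - (n:ℂ) - Complex.I*w₁) := by
    ring
  rw [hrew]
  refine le_trans (norm_sub_le _ _) ?_
  have : C₂ / n + C₁ / n = (C₁ + C₂) / n := by ring
  linarith [hE₁, hE₂, this.le]
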